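/- Let φ: ℝ → ℝ be any function. For v_h ∈ X_h with element gradients V'_k, let E(v_h) = Σ_{k=−K+1}^K h_k φ(V'_k) and E_h(v_h) = Σ_{k=−K+1}^K ω_k · ½(φ(V'_k) + φ(V'_{k+1})) with ω_k = ½(h_k + h_{k+1}). Then the quadrature error of the node-based energy equals a weighted sum of second differences of the energy density: E_h(v_h) = E(v_h) + ¼ Σ_{k=−K+1}^K h_k (φ(V'_{k+1}) − 2φ(V'_k) + φ(V'_{k−1})). -/

import Mathlib

/-- `v : ℤ → ℝ` belongs to the coarse space `X_h`. -/
def IsCoarse (N : ℤ) (ε : ℝ) (L : ℤ → ℤ) (v : ℤ → ℝ) : Prop :=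
  (∀ l : ℤ, v (l + 2 * N) = v l) ∧ v 0 = 0 ∧
    ∀ k l : ℤ, L (k - 1) ≤ l → l ≤ L k →
      v l = v (L (k - 1)) +
        ε * ((l - L (k - 1) : ℤ) : ℝ) *
          ((v (L k) - v (L (k - 1))) / (ε * ((L k - L (k - 1) : ℤ) : ℝ)))

lemma sum_shift_aux7 (a b : ℤ) (hab : a ≤ b) (f : ℤ → ℝ) (hf : f (b+1) = f a) :
    ∑ k ∈ Finset.Icc a b, f (k+1) = ∑ k ∈ Finset.Icc a b, f k := by
  have h1 : ∑ k ∈ Finset.Icc a b, f (k+1) = ∑ k ∈ Finset.Icc (a+1) (b+1), f k := by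
    rw [← Finset.map_add_right_Icc, Finset.sum_map]
    rfl
  have h2 : Finset.Icc a b = insert a (Finset.Icc (a+1) b) := by
    ext x; simp [Finset.mem_Icc]; omega
  have h3 : Finset.Icc (a+1) (b+1) = insert (b+1) (Finset.Icc (a+1) b) := by
    ext x; simp [Finset.mem_Icc]; omega
  rw [h1, h2, h3, Finset.sum_insert (by simp), Finset.sum_insert (by simp), hf]

/-- the quadrature error of the node-based energy equals a
weighted sum of second differences of the energy density. -/
theorem statement7
    (N K : ℤ) (hN : 1 ≤ N) (hK : 1 ≤ K)
    (ε : ℝ) (hε : ε = (N : ℝ)⁻¹)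
    (L : ℤ → ℤ) (hmono : StrictMono L) (hL0 : L 0 = 0)
    (hLper : ∀ k : ℤ, L (k + 2 * K) = L k + 2 * N)
    (hsz : ℤ → ℝ) (hhsz : ∀ k : ℤ, hsz k = ε * ((L k - L (k - 1) : ℤ) : ℝ))
    (φ : ℝ → ℝ)
    (v : ℤ → ℝ) (hv : IsCoarse N ε L v)
    (Vp : ℤ → ℝ) (hVp : ∀ k : ℤ, Vp k = (v (L k) - v (L (k - 1))) / hsz k)
    (ω : ℤ → ℝ) (hω : ∀ k : ℤ, ω k = (hsz k + hsz (k + 1)) / 2) :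
    ∑ k ∈ Finset.Icc (-K + 1) K, ω k * ((φ (Vp k) + φ (Vp (k + 1))) / 2) =
      (∑ k ∈ Finset.Icc (-K + 1) K, hsz k * φ (Vp k)) +
        (1 / 4) * ∑ k ∈ Finset.Icc (-K + 1) K,
          hsz k * (φ (Vp (k + 1)) - 2 * φ (Vp k) + φ (Vp (k - 1))) := by
  have hvp : ∀ l : ℤ, v (l + 2 * N) = v l := hv.1
  have hszper : ∀ k : ℤ, hsz (k + 2*K) = hsz k := by
    intro k
    rw [hhsz, hhsz, show k + 2*K - 1 = (k-1) + 2*K by ring, hLper, hLper]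
    push_cast; ring
  have hvL : ∀ k : ℤ, v (L (k + 2*K)) = v (L k) := by
    intro k; rw [hLper]; exact hvp (L k)
  have hVpper : ∀ k : ℤ, Vp (k + 2*K) = Vp k := by
    intro k
    rw [hVp, hVp, hszper, hvL, show k + 2*K - 1 = (k-1) + 2*K by ring, hvL]
  set S := Finset.Icc (-K + 1) K with hS
  have hab : (-K + 1 : ℤ) ≤ K := by omega
  have hbdry : ∀ f : ℤ → ℝ, (∀ k, f (k + 2*K) = f k) → f (K + 1) = f (-K + 1) := by
    intro f hf
    have := hf (-K + 1)
    rw [show -K + 1 + 2*K = K + 1 by ring] at this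
    exact this
  have e1 : ∑ k ∈ S, hsz (k+1) * φ (Vp (k+1)) = ∑ k ∈ S, hsz k * φ (Vp k) := by
    exact sum_shift_aux7 _ _ hab (fun k => hsz k * φ (Vp k))
      (hbdry (fun k => hsz k * φ (Vp k)) (fun k => by rw [hszper, hVpper]))
  have e2 : ∑ k ∈ S, hsz (k+1) * φ (Vp k) = ∑ k ∈ S, hsz k * φ (Vp (k-1)) := by
    have := sum_shift_aux7 (-K+1) K hab (fun k => hsz k * φ (Vp (k-1)))
      (hbdry (fun k => hsz k * φ (Vp (k-1)))
        (fun k => by rw [show k + 2*K - 1 = (k-1) + 2*K by ring, hszper, hVpper]))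
    simpa using this
  have expandL : ∀ k ∈ S, ω k * ((φ (Vp k) + φ (Vp (k+1))) / 2) =
      hsz k * φ (Vp k) / 4 + hsz k * φ (Vp (k+1)) / 4 +
      hsz (k+1) * φ (Vp k) / 4 + hsz (k+1) * φ (Vp (k+1)) / 4 := by
    intro k _; rw [hω]; ring
  have expandR : ∀ k ∈ S, hsz k * (φ (Vp (k + 1)) - 2 * φ (Vp k) + φ (Vp (k - 1))) =
      hsz k * φ (Vp (k+1)) - 2 * (hsz k * φ (Vp k)) + hsz k * φ (Vp (k-1)) := by
    intro k _; ring
  rw [Finset.sum_congr rfl expandL, Finset.sum_congr rfl expandR]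
  simp only [Finset.sum_add_distrib, Finset.sum_sub_distrib, ← Finset.sum_div,
    ← Finset.mul_sum, ← Finset.sum_mul]
  rw [e1, e2]
  ring
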